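/- Let a ≥ 1/2 be real. Then the series Σ_{n=0}^∞ [(2a)_n (1−2a)_n / ((4a)_n n!)] converges and its sum equals Γ(4a)Γ(4a−1)/(Γ(2a)Γ(6a−1)). (This is Gauss's evaluation F(2a, 1−2a, 4a; 1) = Γ(4a)Γ(4a−1)/(Γ(2a)Γ(6a−1)).) -/

import Mathlib

set_option maxHeartbeats 1000000

open Set Filter Polynomial MeasureTheory
open scoped ENNReal NNReal


lemma gamma_asc (x : ℝ) (hx : 0 < x) (n : ℕ) :
    Real.Gamma (x + n) = Real.Gamma x * (ascPochhammer ℝ n).eval x := by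
  induction n with
  | zero => simp
  | succ n ih =>
    have hxn : x + n ≠ 0 := by positivity
    have h1 : (x + ((n:ℕ)+1 : ℕ) : ℝ) = (x + n) + 1 := by push_cast; ring
    rw [h1, Real.Gamma_add_one hxn, ih, ascPochhammer_succ_eval]
    ring

lemma real_beta (x y : ℝ) (hx : 0 < x) (hy : 0 < y) :
    ∫ t in (0:ℝ)..1, t ^ (x-1) * (1-t) ^ (y-1) =
      Real.Gamma x * Real.Gamma y / Real.Gamma (x+y) := by
  have h := Complex.Gamma_mul_Gamma_eq_betaIntegral (s := (x:ℂ)) (t := (y:ℂ))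
    (by simpa using hx) (by simpa using hy)
  have hbeta : Complex.betaIntegral x y =
      ((∫ t in (0:ℝ)..1, t ^ (x-1) * (1-t) ^ (y-1) : ℝ) : ℂ) := by
    rw [Complex.betaIntegral, ← intervalIntegral.integral_ofReal]
    refine intervalIntegral.integral_congr fun t ht => ?_
    rw [uIcc_of_le (by norm_num)] at ht
    rw [show ((x:ℂ) - 1) = ((x - 1 : ℝ) : ℂ) by push_cast; ring,
        show ((y:ℂ) - 1) = ((y - 1 : ℝ) : ℂ) by push_cast; ring,
        show (1 - (t:ℂ)) = ((1 - t : ℝ) : ℂ) by push_cast; ring,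
        ← Complex.ofReal_cpow ht.1, ← Complex.ofReal_cpow (by linarith [ht.2])]
    push_cast; ring
  rw [hbeta, ← Complex.ofReal_add, Complex.Gamma_ofReal, Complex.Gamma_ofReal,
    Complex.Gamma_ofReal, ← Complex.ofReal_mul, ← Complex.ofReal_mul] at h
  have h2 := Complex.ofReal_injective h
  have hΓ : Real.Gamma (x+y) ≠ 0 := (Real.Gamma_pos_of_pos (by linarith)).ne'
  field_simp
  linarith [h2]


lemma summable_asc_abs (c : ℝ) (k : ℕ) {t : ℝ} (ht : |t| < 1) :
    Summable (fun n : ℕ => |(ascPochhammer ℝ (n+k)).eval c| * |t| ^ n / n.factorial) := by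
  set r : ℝ := (1 + |t|) / 2 with hr
  have h0t : (0:ℝ) ≤ |t| := abs_nonneg t
  have hr1 : r < 1 := by rw [hr]; linarith
  have htr : |t| < r := by rw [hr]; linarith
  refine summable_of_ratio_norm_eventually_le hr1 ?_
  have htend : Tendsto (fun n : ℕ => (|c + (n+k)| * |t|) / (n+1)) atTop (nhds (|t|)) := by
    have h1 : Tendsto (fun n : ℕ => (c + (n+k)) / (n+1)) atTop (nhds 1) := by
      have : (fun n : ℕ => (c + (n+k)) / (n+1)) =
          fun n : ℕ => (c + k - 1) / (n+1) + 1 := by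
        funext n
        have : (n:ℝ) + 1 ≠ 0 := by positivity
        field_simp; ring
      rw [this]
      have h2 : Tendsto (fun n : ℕ => (c + k - 1) / (n+1)) atTop (nhds 0) := by
        have := tendsto_const_div_atTop_nhds_zero_nat (c + k - 1)
        have h3 : Tendsto (fun n : ℕ => n + 1) atTop atTop := tendsto_add_atTop_nat 1
        have h5 := this.comp h3
        refine h5.congr fun n => ?_
        simp
      simpa using h2.add tendsto_const_nhds
    have h4 : Tendsto (fun n : ℕ => |(c + (n+k)) / (n+1)| * |t|) atTop (nhds (|1| * |t|)) :=
      (h1.abs).mul tendsto_const_nhds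
    simp only [abs_one, one_mul] at h4
    refine h4.congr fun n => ?_
    rw [abs_div, abs_of_pos (show (0:ℝ) < (n:ℝ)+1 by positivity)]
    ring
  have hev : ∀ᶠ n : ℕ in atTop, (|c + (n+k)| * |t|) / (n+1) ≤ r :=
    htend.eventually_le_const htr
  filter_upwards [hev] with n hn
  have hfac : ((n+1).factorial : ℝ) = (n+1) * n.factorial := by
    rw [Nat.factorial_succ]; push_cast; ring
  have hasc : (ascPochhammer ℝ (n+1+k)).eval c =
      (ascPochhammer ℝ (n+k)).eval c * (c + (n+k)) := by
    rw [show n+1+k = (n+k)+1 by ring, ascPochhammer_succ_eval]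
    push_cast; ring
  rw [Real.norm_eq_abs, Real.norm_eq_abs,
    abs_of_nonneg (show (0:ℝ) ≤ |(ascPochhammer ℝ (n+1+k)).eval c| * |t|^(n+1) / (n+1).factorial by positivity),
    abs_of_nonneg (show (0:ℝ) ≤ |(ascPochhammer ℝ (n+k)).eval c| * |t|^n / n.factorial by positivity)]
  have hf0 : (0:ℝ) < (n.factorial:ℝ) := by exact_mod_cast n.factorial_pos
  have key : |(ascPochhammer ℝ (n+1+k)).eval c| * |t|^(n+1) / (n+1).factorial
      = ((|c + ((n:ℝ)+(k:ℝ))| * |t|) / ((n:ℝ)+1)) * (|(ascPochhammer ℝ (n+k)).eval c| * |t|^n / n.factorial) := by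
    rw [hasc, abs_mul, hfac]
    field_simp
    ring
  rw [key]
  exact mul_le_mul_of_nonneg_right hn (by positivity)



lemma summable_term (c : ℝ) (k : ℕ) {z : ℝ} (hz : |z| < 1) :
    Summable (fun n : ℕ => (ascPochhammer ℝ (n+k)).eval c * z ^ n / n.factorial) := by
  refine Summable.of_norm ?_
  refine (summable_asc_abs c k hz).congr fun n => ?_
  rw [Real.norm_eq_abs, abs_div, abs_mul, abs_pow,
    abs_of_nonneg (show (0:ℝ) ≤ (n.factorial:ℝ) by positivity)]

lemma binom_tsum (c : ℝ) {t : ℝ} (h0 : 0 ≤ t) (h1 : t < 1) :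
    ∑' n : ℕ, (ascPochhammer ℝ n).eval c * t ^ n / n.factorial = (1 - t) ^ (-c) := by
  set u : ℝ → ℝ := fun z => ∑' n : ℕ, (ascPochhammer ℝ n).eval c * z ^ n / n.factorial with hu
  set D : ℝ → ℝ := fun z => ∑' n : ℕ, (ascPochhammer ℝ (n+1)).eval c * z ^ n / n.factorial with hD
  -- u via shifted series
  have husum : ∀ z : ℝ, |z| < 1 →
      Summable (fun n : ℕ => (ascPochhammer ℝ n).eval c * z ^ n / n.factorial) := by
    intro z hz
    refine (summable_term c 0 hz).congr fun n => by norm_num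
  have hshift : ∀ z : ℝ, |z| < 1 →
      u z = 1 + ∑' n : ℕ, (ascPochhammer ℝ (n+1)).eval c * z ^ (n+1) / (n+1).factorial := by
    intro z hz
    show (∑' n : ℕ, (ascPochhammer ℝ n).eval c * z ^ n / n.factorial) = _
    rw [Summable.tsum_eq_zero_add (husum z hz)]
    norm_num
  -- derivative
  have hderiv : ∀ x : ℝ, |x| < 1 → HasDerivAt u (D x) x := by
    intro x hx
    set r : ℝ := (1 + |x|) / 2 with hr
    have h0x : (0:ℝ) ≤ |x| := abs_nonneg x
    have hr1 : r < 1 := by rw [hr]; linarith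
    have hxr : |x| < r := by rw [hr]; linarith
    have hr0 : 0 < r := by rw [hr]; linarith
    set s : Set ℝ := Ioo (-r) r with hs
    have hso : IsOpen s := isOpen_Ioo
    have hsc : IsPreconnected s := (convex_Ioo _ _).isPreconnected
    have hxs : x ∈ s := by rw [hs]; constructor <;> [linarith [neg_abs_le x]; linarith [le_abs_self x]]
    have h0s : (0:ℝ) ∈ s := by rw [hs]; constructor <;> linarith
    have hG : ∀ (n : ℕ) (z : ℝ), z ∈ s →
        HasDerivAt (fun z : ℝ => (ascPochhammer ℝ (n+1)).eval c * z ^ (n+1) / (n+1).factorial)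
          ((ascPochhammer ℝ (n+1)).eval c * z ^ n / n.factorial) z := by
      intro n z _
      have h := (hasDerivAt_pow (n+1) z).const_mul ((ascPochhammer ℝ (n+1)).eval c / (n+1).factorial)
      have heq : ∀ w : ℝ, (ascPochhammer ℝ (n+1)).eval c / (n+1).factorial * w ^ (n+1)
          = (ascPochhammer ℝ (n+1)).eval c * w ^ (n+1) / (n+1).factorial := fun w => by ring
      have h2 : (ascPochhammer ℝ (n+1)).eval c / (n+1).factorial * (((n:ℝ)+1) * z ^ n)
          = (ascPochhammer ℝ (n+1)).eval c * z ^ n / n.factorial := by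
        have hfac : ((n+1).factorial : ℝ) = ((n:ℝ)+1) * n.factorial := by
          rw [Nat.factorial_succ]; push_cast; ring
        have hf0 : (n.factorial : ℝ) ≠ 0 := by positivity
        rw [hfac]; field_simp
      simp only [heq] at h
      rw [← h2]
      refine h.congr_deriv ?_; rw [Nat.add_sub_cancel]
      push_cast; ring
    have hbound : ∀ (n : ℕ) (z : ℝ), z ∈ s →
        ‖(ascPochhammer ℝ (n+1)).eval c * z ^ n / n.factorial‖
          ≤ |(ascPochhammer ℝ (n+1)).eval c| * r ^ n / n.factorial := by
      intro n z hzs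
      rw [Real.norm_eq_abs, abs_div, abs_mul, abs_pow,
        abs_of_nonneg (show (0:ℝ) ≤ (n.factorial:ℝ) by positivity)]
      have hz : |z| ≤ r := by
        rw [abs_le]; exact ⟨hzs.1.le, hzs.2.le⟩
      gcongr
    have hU : Summable (fun n : ℕ => |(ascPochhammer ℝ (n+1)).eval c| * r ^ n / n.factorial) := by
      refine (summable_asc_abs c 1 (t := r) (by rwa [abs_of_pos hr0])).congr fun n => by
        rw [abs_of_pos hr0]
    have hg0 : Summable (fun n : ℕ =>
        (ascPochhammer ℝ (n+1)).eval c * (0:ℝ) ^ (n+1) / (n+1).factorial) := by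
      refine summable_zero.congr fun n => ?_
      simp [zero_pow (Nat.succ_ne_zero n)]
    have hder := hasDerivAt_tsum_of_isPreconnected hU hso hsc hG hbound h0s hg0 hxs
    have hEq : (fun z : ℝ => 1 + ∑' n : ℕ,
        (ascPochhammer ℝ (n+1)).eval c * z ^ (n+1) / (n+1).factorial) =ᶠ[nhds x] u := by
      refine Filter.eventuallyEq_of_mem (hso.mem_nhds hxs) fun z hzs => ?_
      have hz1 : |z| < 1 := by
        rw [abs_lt]; exact ⟨by linarith [hzs.1], by linarith [hzs.2]⟩
      exact (hshift z hz1).symm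
    have hder2 : HasDerivAt (fun z : ℝ => 1 + ∑' n : ℕ,
        (ascPochhammer ℝ (n+1)).eval c * z ^ (n+1) / (n+1).factorial) (D x) x := by
      simpa using (hder.const_add (1:ℝ))
    exact hder2.congr_of_eventuallyEq hEq.symm
  -- ODE: (1-x) * D x = c * u x
  have hode : ∀ x : ℝ, |x| < 1 → (1 - x) * D x = c * u x := by
    intro x hx
    have hS1 : Summable (fun n : ℕ => (ascPochhammer ℝ (n+1)).eval c * x ^ n / n.factorial) :=
      summable_term c 1 hx
    have hS0 : Summable (fun n : ℕ => (ascPochhammer ℝ n).eval c * x ^ n / n.factorial) :=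
      husum x hx
    set W : ℕ → ℝ := fun n => (ascPochhammer ℝ n).eval c * n * x ^ n / n.factorial with hW
    have hWsucc : ∀ n : ℕ, W (n+1) = ((ascPochhammer ℝ (n+1)).eval c * x ^ n / n.factorial) * x := by
      intro n
      rw [hW]
      have hfac : ((n+1).factorial : ℝ) = ((n:ℝ)+1) * n.factorial := by
        rw [Nat.factorial_succ]; push_cast; ring
      have hf0 : (n.factorial : ℝ) ≠ 0 := by positivity
      simp only
      rw [hfac]
      push_cast
      field_simp
      ring
    have hWsum : Summable W := by
      rw [← summable_nat_add_iff 1]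
      exact (hS1.mul_right x).congr fun n => (hWsucc n).symm
    have hW0 : W 0 = 0 := by simp [hW]
    -- x * D x = ∑' W
    have hxD : x * D x = ∑' n : ℕ, W n := by
      rw [Summable.tsum_eq_zero_add hWsum, hW0, zero_add, hD]
      rw [← tsum_mul_left]
      exact tsum_congr fun n => by rw [hWsucc n]; ring
    -- c * u x = ∑' c • terms
    have hcu : c * u x = ∑' n : ℕ, c * ((ascPochhammer ℝ n).eval c * x ^ n / n.factorial) := by
      rw [hu, ← tsum_mul_left]
    -- termwise: D-term = c-term + W-term
    have hterm : ∀ n : ℕ, (ascPochhammer ℝ (n+1)).eval c * x ^ n / n.factorial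
        = c * ((ascPochhammer ℝ n).eval c * x ^ n / n.factorial) + W n := by
      intro n
      rw [hW, ascPochhammer_succ_eval]
      simp only
      ring
    have hDsplit : D x = c * u x + x * D x := by
      rw [hD, hcu, hxD]
      rw [← Summable.tsum_add (hS0.mul_left c) hWsum]
      exact tsum_congr hterm
    have : D x - x * D x = c * u x := by linarith [hDsplit]
    linarith [this]
  -- constancy of ψ z = u z * (1-z)^c on [0,t]
  have hpsi : ∀ x : ℝ, 0 ≤ x → x < 1 →
      HasDerivAt (fun z : ℝ => u z * (1-z) ^ c) 0 x := by
    intro x hx0 hx1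
    have hx : |x| < 1 := by rw [abs_of_nonneg hx0]; exact hx1
    have h1x : (0:ℝ) < 1 - x := by linarith
    have hrp : HasDerivAt (fun z : ℝ => (1-z) ^ c) ((-1) * c * (1-x) ^ (c-1)) x := by
      have hbase : HasDerivAt (fun z : ℝ => 1 - z) (-1) x := by
        simpa using (hasDerivAt_id x).const_sub 1
      exact hbase.rpow_const (Or.inl h1x.ne')
    have hmul := (hderiv x hx).mul hrp
    have hzero : D x * (1-x) ^ c + u x * ((-1) * c * (1-x) ^ (c-1)) = 0 := by
      have hsplit : (1-x) ^ c = (1-x) ^ (c-1) * (1-x) := by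
        rw [← Real.rpow_add_one h1x.ne' (c-1)]
        norm_num
      rw [hsplit]
      have hfact : D x * ((1-x) ^ (c-1) * (1-x)) + u x * ((-1) * c * (1-x) ^ (c-1))
          = (1-x) ^ (c-1) * ((1-x) * D x - c * u x) := by ring
      rw [hfact, hode x hx]
      ring
    rw [← hzero]
    exact hmul
  have hconst := constant_of_has_deriv_right_zero (f := fun z : ℝ => u z * (1-z) ^ c)
    (a := (0:ℝ)) (b := t)
    (fun x hx => ((hpsi x hx.1 (lt_of_le_of_lt hx.2 h1)).continuousAt).continuousWithinAt)
    (fun x hx => ((hpsi x hx.1 (lt_of_lt_of_le hx.2 (le_of_lt h1))).hasDerivWithinAt))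
    t (by constructor <;> [exact h0; exact le_refl t])
  have hu0 : u 0 = 1 := by
    show (∑' n : ℕ, (ascPochhammer ℝ n).eval c * (0:ℝ) ^ n / n.factorial) = 1
    rw [Summable.tsum_eq_zero_add (husum 0 (by norm_num))]
    have : ∀ n : ℕ, (ascPochhammer ℝ (n+1)).eval c * (0:ℝ) ^ (n+1) / (n+1).factorial = 0 := by
      intro n; simp [zero_pow (Nat.succ_ne_zero n)]
    simp [this]
  have hpsit : u t * (1-t) ^ c = 1 := by
    have h2 : u 0 * (1-(0:ℝ)) ^ c = 1 := by
      rw [hu0]; norm_num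
    have h3 : u t * (1-t) ^ c = u 0 * (1-(0:ℝ)) ^ c := hconst
    rw [h3, h2]
  have h1t : (0:ℝ) < 1 - t := by linarith
  have hpow : (0:ℝ) < (1-t) ^ c := Real.rpow_pos_of_pos h1t c
  rw [Real.rpow_neg h1t.le c]
  rw [show (∑' n : ℕ, (ascPochhammer ℝ n).eval c * t ^ n / n.factorial) = u t from rfl]
  field_simp
  linarith [hpsit]

theorem gauss_main (b : ℝ) (hb1 : 1 ≤ b) :
    Summable (fun n : ℕ =>
      ((ascPochhammer ℝ n).eval b * (ascPochhammer ℝ n).eval (1 - b)) /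
        ((ascPochhammer ℝ n).eval (2*b) * (Nat.factorial n : ℝ))) ∧
    (∑' n : ℕ,
      ((ascPochhammer ℝ n).eval b * (ascPochhammer ℝ n).eval (1 - b)) /
        ((ascPochhammer ℝ n).eval (2*b) * (Nat.factorial n : ℝ)))
      = Real.Gamma (2*b) * Real.Gamma (2*b - 1) /
          (Real.Gamma b * Real.Gamma (3*b - 1)) := by
  have hb0 : (0:ℝ) < b := by linarith
  have h2b : (0:ℝ) < 2*b := by linarith
  have h3b : (0:ℝ) < 3*b - 1 := by linarith
  have hbm1 : (0:ℝ) ≤ b - 1 := by linarith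
  set c : ℝ := 1 - b with hc
  set S : Set ℝ := Ioo (0:ℝ) 1 with hS
  set C : ℝ := Real.Gamma (2*b) / (Real.Gamma b * Real.Gamma b) with hC
  set g : ℕ → ℝ → ℝ := fun n t =>
    ((ascPochhammer ℝ n).eval c / n.factorial) * (t ^ (b+(n:ℝ)-1) * (1-t) ^ (b-1)) with hg
  -- continuity of the integrands
  have hcont : ∀ n : ℕ, Continuous (g n) := by
    intro n
    refine continuous_const.mul (Continuous.mul ?_ ?_)
    · exact Real.continuous_rpow_const (by
        have := Nat.cast_nonneg (α := ℝ) n; linarith)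
    · exact (Real.continuous_rpow_const hbm1).comp (continuous_const.sub continuous_id)
  have hint : ∀ n : ℕ, IntegrableOn (g n) S := by
    intro n
    exact ((hcont n).integrableOn_Icc (a := (0:ℝ)) (b := 1)).mono_set Ioo_subset_Icc_self
  have hmeas : ∀ n : ℕ, AEStronglyMeasurable (g n) (volume.restrict S) :=
    fun n => (hcont n).aestronglyMeasurable
  -- beta values
  have hbeta : ∀ n : ℕ, ∫ t in S, t ^ (b+(n:ℝ)-1) * (1-t) ^ (b-1) =
      Real.Gamma (b+n) * Real.Gamma b / Real.Gamma (2*b+n) := by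
    intro n
    have h := real_beta (b+n) b (by positivity) hb0
    rw [intervalIntegral.integral_of_le zero_le_one, integral_Ioc_eq_integral_Ioo] at h
    rw [hS]
    rw [h]
    rw [show b+(n:ℝ)+b = 2*b+n by ring]
  -- per-term identity
  have hterm : ∀ n : ℕ,
      ((ascPochhammer ℝ n).eval b * (ascPochhammer ℝ n).eval c) /
        ((ascPochhammer ℝ n).eval (2*b) * (n.factorial : ℝ)) = C * ∫ t in S, g n t := by
    intro n
    have h1 : ∫ t in S, g n t = ((ascPochhammer ℝ n).eval c / n.factorial) *
        (Real.Gamma (b+n) * Real.Gamma b / Real.Gamma (2*b+n)) := by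
      rw [hg]
      rw [MeasureTheory.integral_const_mul]
      rw [hbeta n]
    rw [h1, gamma_asc b hb0 n, gamma_asc (2*b) h2b n]
    have hasc2 : (0:ℝ) < (ascPochhammer ℝ n).eval (2*b) := ascPochhammer_pos n _ h2b
    have hΓb : (0:ℝ) < Real.Gamma b := Real.Gamma_pos_of_pos hb0
    have hΓ2b : (0:ℝ) < Real.Gamma (2*b) := Real.Gamma_pos_of_pos h2b
    have hfac : (0:ℝ) < (n.factorial : ℝ) := by positivity
    rw [hC]
    field_simp
  -- pointwise sums
  have hsummand : ∀ t ∈ S, Summable (fun n : ℕ => g n t) := by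
    intro t ht
    have ht1 : |t| < 1 := by rw [abs_of_pos ht.1]; exact ht.2
    have heq : ∀ n : ℕ, g n t = (t ^ (b-1) * (1-t) ^ (b-1)) *
        ((ascPochhammer ℝ n).eval c * t ^ n / n.factorial) := by
      intro n
      rw [hg]
      simp only
      rw [show b+(n:ℝ)-1 = (b-1) + n by ring, Real.rpow_add ht.1, Real.rpow_natCast]
      ring
    refine (((summable_term c 0 ht1).congr fun n => by norm_num).mul_left
      (t ^ (b-1) * (1-t) ^ (b-1))).congr fun n => (heq n).symm
  have htsum : ∀ t ∈ S, ∑' n : ℕ, g n t = t ^ (b-1) * (1-t) ^ (2*b-2) := by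
    intro t ht
    have ht1t : (0:ℝ) < 1 - t := by linarith [ht.2]
    have heq : ∀ n : ℕ, g n t = (t ^ (b-1) * (1-t) ^ (b-1)) *
        ((ascPochhammer ℝ n).eval c * t ^ n / n.factorial) := by
      intro n
      rw [hg]
      simp only
      rw [show b+(n:ℝ)-1 = (b-1) + n by ring, Real.rpow_add ht.1, Real.rpow_natCast]
      ring
    rw [tsum_congr heq, tsum_mul_left, binom_tsum c ht.1.le ht.2]
    rw [show -c = b - 1 by rw [hc]; ring]
    rw [show (2:ℝ)*b-2 = (b-1) + (b-1) by ring, Real.rpow_add ht1t]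
    ring
  -- sign constancy beyond N
  set N : ℕ := ⌈b⌉₊ with hN
  have hNb : b ≤ (N:ℝ) := Nat.le_ceil b
  have hprod : ∀ m : ℕ, (ascPochhammer ℝ (m+N)).eval c =
      (ascPochhammer ℝ N).eval c * ∏ j ∈ Finset.range m, (c + N + j) := by
    intro m
    induction m with
    | zero => simp
    | succ m ih =>
      rw [show m+1+N = (m+N)+1 by ring, ascPochhammer_succ_eval, ih, Finset.prod_range_succ]
      push_cast
      ring
  set ε : ℝ := if 0 ≤ (ascPochhammer ℝ N).eval c then 1 else -1 with hε
  have hsign : ∀ m : ℕ, |(ascPochhammer ℝ (m+N)).eval c| = ε * (ascPochhammer ℝ (m+N)).eval c := by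
    intro m
    have hppos : (0:ℝ) ≤ ∏ j ∈ Finset.range m, (c + N + j) := by
      refine Finset.prod_nonneg fun j _ => ?_
      have hj : (0:ℝ) ≤ (j:ℝ) := Nat.cast_nonneg j
      rw [hc]; linarith
    rw [hprod m, abs_mul, abs_of_nonneg hppos, hε]
    split_ifs with h
    · rw [abs_of_nonneg h]; ring
    · rw [abs_of_neg (lt_of_not_ge h)]; ring
  have habs : ∀ (m : ℕ) (t : ℝ), t ∈ S → |g (m+N) t| = ε * g (m+N) t := by
    intro m t ht
    have hpow1 : (0:ℝ) ≤ t ^ (b+((m+N:ℕ):ℝ)-1) := Real.rpow_nonneg ht.1.le _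
    have hpow2 : (0:ℝ) ≤ (1-t) ^ (b-1) := Real.rpow_nonneg (by linarith [ht.2]) _
    have hfac : (0:ℝ) < ((m+N).factorial : ℝ) := by positivity
    rw [hg]
    simp only
    rw [abs_mul, abs_div, abs_of_nonneg (mul_nonneg hpow1 hpow2),
      abs_of_pos hfac, hsign m]
    ring
  -- uniform bound for the tail sums
  set M : ℝ := 1 + ∑ n ∈ Finset.range N, |(ascPochhammer ℝ n).eval c| / n.factorial with hM
  have hM0 : (0:ℝ) ≤ M := by
    rw [hM]
    have : (0:ℝ) ≤ ∑ n ∈ Finset.range N, |(ascPochhammer ℝ n).eval c| / n.factorial :=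
      Finset.sum_nonneg fun n _ => by positivity
    linarith
  have htailsummand : ∀ t ∈ S, Summable (fun m : ℕ => g (m+N) t) :=
    fun t ht => (summable_nat_add_iff N).2 (hsummand t ht)
  have htailabs : ∀ t ∈ S, Summable (fun m : ℕ => |g (m+N) t|) := by
    intro t ht
    exact ((htailsummand t ht).mul_left ε).congr fun m => (habs m t ht).symm
  have htailbound : ∀ t ∈ S, ∑' m : ℕ, |g (m+N) t| ≤ M := by
    intro t ht
    have h1t : (0:ℝ) < 1 - t := by linarith [ht.2]
    have hTle : t ^ (b-1) * (1-t) ^ (2*b-2) ≤ 1 := by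
      have h1 : t ^ (b-1) ≤ 1 := Real.rpow_le_one ht.1.le ht.2.le hbm1
      have h2 : (1-t) ^ (2*b-2) ≤ 1 := Real.rpow_le_one h1t.le (by linarith [ht.1]) (by linarith)
      exact mul_le_one₀ h1 (Real.rpow_nonneg h1t.le _) h2
    have hTge : (0:ℝ) ≤ t ^ (b-1) * (1-t) ^ (2*b-2) :=
      mul_nonneg (Real.rpow_nonneg ht.1.le _) (Real.rpow_nonneg h1t.le _)
    have hRle : |∑ n ∈ Finset.range N, g n t| ≤
        ∑ n ∈ Finset.range N, |(ascPochhammer ℝ n).eval c| / n.factorial := by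
      refine (Finset.abs_sum_le_sum_abs _ _).trans (Finset.sum_le_sum fun n _ => ?_)
      rw [hg]
      simp only
      have hfac : (0:ℝ) < (n.factorial : ℝ) := by positivity
      rw [abs_mul, abs_div, abs_of_pos hfac]
      have hp1 : t ^ (b+(n:ℝ)-1) ≤ 1 := by
        refine Real.rpow_le_one ht.1.le ht.2.le ?_
        have := Nat.cast_nonneg (α := ℝ) n
        linarith
      have hp2 : (1-t) ^ (b-1) ≤ 1 := Real.rpow_le_one h1t.le (by linarith [ht.1]) hbm1
      have hp1' : (0:ℝ) ≤ t ^ (b+(n:ℝ)-1) := Real.rpow_nonneg ht.1.le _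
      have hp2' : (0:ℝ) ≤ (1-t) ^ (b-1) := Real.rpow_nonneg h1t.le _
      have : |t ^ (b+(n:ℝ)-1) * (1-t) ^ (b-1)| ≤ 1 := by
        rw [abs_of_nonneg (mul_nonneg hp1' hp2')]
        exact mul_le_one₀ hp1 hp2' hp2
      have hd : (0:ℝ) ≤ |(ascPochhammer ℝ n).eval c| / n.factorial := by positivity
      calc |(ascPochhammer ℝ n).eval c| / n.factorial * |t ^ (b+(n:ℝ)-1) * (1-t) ^ (b-1)|
          ≤ |(ascPochhammer ℝ n).eval c| / n.factorial * 1 := by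
            exact mul_le_mul_of_nonneg_left this hd
        _ = |(ascPochhammer ℝ n).eval c| / n.factorial := mul_one _
    -- tail sum value
    have hsplit := Summable.sum_add_tsum_nat_add N (hsummand t ht)
    have htail_eq : ∑' m : ℕ, g (m+N) t =
        (t ^ (b-1) * (1-t) ^ (2*b-2)) - ∑ n ∈ Finset.range N, g n t := by
      rw [← htsum t ht, ← hsplit]
      ring
    have h1 : ∑' m : ℕ, |g (m+N) t| = ε * ∑' m : ℕ, g (m+N) t := by
      rw [← tsum_mul_left]
      exact tsum_congr fun m => habs m t ht
    rw [h1, htail_eq]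
    have hεabs : |ε| = 1 := by
      rw [hε]; split_ifs <;> simp
    have h2 : ε * ((t ^ (b-1) * (1-t) ^ (2*b-2)) - ∑ n ∈ Finset.range N, g n t)
        ≤ |ε * ((t ^ (b-1) * (1-t) ^ (2*b-2)) - ∑ n ∈ Finset.range N, g n t)| := le_abs_self _
    rw [abs_mul, hεabs, one_mul] at h2
    refine h2.trans ?_
    refine (abs_sub _ _).trans ?_
    rw [hM, abs_of_nonneg hTge]
    linarith [hRle]
  -- lintegral bound
  have hvol : volume S = 1 := by rw [hS, Real.volume_Ioo]; norm_num
  have hmeasS : MeasurableSet S := by rw [hS]; exact measurableSet_Ioo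
  have hlintbound : ∫⁻ t in S, (∑' m : ℕ, (‖g (m+N) t‖₊ : ℝ≥0∞)) ∂volume ≤ ENNReal.ofReal M := by
    have hb : ∀ t ∈ S, (∑' m : ℕ, (‖g (m+N) t‖₊ : ℝ≥0∞)) ≤ ENNReal.ofReal M := by
      intro t ht
      have h1 : ∀ m : ℕ, (‖g (m+N) t‖₊ : ℝ≥0∞) = ENNReal.ofReal (|g (m+N) t|) := by
        intro m
        rw [← enorm_eq_nnnorm, ← ofReal_norm, Real.norm_eq_abs]
      rw [tsum_congr h1, ← ENNReal.ofReal_tsum_of_nonneg (fun m => abs_nonneg _) (htailabs t ht)]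
      exact ENNReal.ofReal_le_ofReal (htailbound t ht)
    calc ∫⁻ t in S, (∑' m : ℕ, (‖g (m+N) t‖₊ : ℝ≥0∞)) ∂volume
        ≤ ∫⁻ _ in S, ENNReal.ofReal M ∂volume := setLIntegral_mono' hmeasS hb
      _ = ENNReal.ofReal M * volume S := setLIntegral_const S _
      _ = ENNReal.ofReal M := by rw [hvol, mul_one]
  have hlint : ∑' m : ℕ, ∫⁻ t in S, ‖g (m+N) t‖₊ ∂volume ≠ ⊤ := by
    rw [← MeasureTheory.lintegral_tsum (f := fun m t => (‖g (m+N) t‖₊ : ℝ≥0∞)) (fun m => (hmeas (m+N)).enorm)]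
    exact (lt_of_le_of_lt hlintbound ENNReal.ofReal_lt_top).ne
  have hSumInt : Summable (fun m : ℕ => ∫ t in S, g (m+N) t) := by
    refine Summable.of_norm_bounded (g := fun m => (∫⁻ t in S, ‖g (m+N) t‖₊ ∂volume).toReal)
      (ENNReal.summable_toReal hlint) fun m => ?_
    have h2 := MeasureTheory.norm_integral_le_lintegral_norm (μ := volume.restrict S) (g (m+N))
    simp only [Real.norm_eq_abs] at h2
    have h3 : ∀ t2 : ℝ, ENNReal.ofReal |g (m+N) t2| = (‖g (m+N) t2‖₊ : ℝ≥0∞) := by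
      intro t2
      rw [← enorm_eq_nnnorm, ← ofReal_norm, Real.norm_eq_abs]
    simp only [h3] at h2
    exact h2
  have hswap : ∫ t in S, (∑' m : ℕ, g (m+N) t) ∂volume = ∑' m : ℕ, ∫ t in S, g (m+N) t :=
    MeasureTheory.integral_tsum (fun m => hmeas (m+N)) hlint
  have hIntSummable : Summable (fun n : ℕ => ∫ t in S, g n t) := (summable_nat_add_iff N).1 hSumInt
  constructor
  · exact (hIntSummable.mul_left C).congr fun n => (hterm n).symm
  · have hTcont : Continuous fun t : ℝ => t ^ (b-1) * (1-t) ^ (2*b-2) :=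
      (Real.continuous_rpow_const hbm1).mul
        ((Real.continuous_rpow_const (by linarith)).comp (continuous_const.sub continuous_id))
    have hT : IntegrableOn (fun t : ℝ => t ^ (b-1) * (1-t) ^ (2*b-2)) S := by
      rw [hS]
      exact (hTcont.integrableOn_Icc (a := 0) (b := 1)).mono_set Ioo_subset_Icc_self
    have hR : IntegrableOn (fun t : ℝ => ∑ n ∈ Finset.range N, g n t) S :=
      MeasureTheory.integrable_finset_sum _ (fun n _ => hint n)
    have htail_int_eq : ∫ t in S, (∑' m : ℕ, g (m+N) t) ∂volume
        = ∫ t in S, (t ^ (b-1) * (1-t) ^ (2*b-2) - ∑ n ∈ Finset.range N, g n t) ∂volume := by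
      refine setIntegral_congr_fun hmeasS fun t ht => ?_
      have h3 := Summable.sum_add_tsum_nat_add N (hsummand t ht)
      rw [htsum t ht] at h3
      linarith [h3]
    have hval : ∑' n : ℕ, ∫ t in S, g n t = ∫ t in S, t ^ (b-1) * (1-t) ^ (2*b-2) := by
      rw [← Summable.sum_add_tsum_nat_add N hIntSummable, ← hswap, htail_int_eq,
        MeasureTheory.integral_sub hT hR, MeasureTheory.integral_finset_sum _ (fun n _ => hint n)]
      ring
    have hbetaT : ∫ t in S, t ^ (b-1) * (1-t) ^ (2*b-2) =
        Real.Gamma b * Real.Gamma (2*b-1) / Real.Gamma (3*b-1) := by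
      have h := real_beta b (2*b-1) hb0 (by linarith)
      rw [intervalIntegral.integral_of_le zero_le_one, integral_Ioc_eq_integral_Ioo] at h
      rw [hS, show (2:ℝ)*b-2 = 2*b-1-1 by ring, h, show b+(2*b-1) = 3*b-1 by ring]
    calc (∑' n : ℕ, ((ascPochhammer ℝ n).eval b * (ascPochhammer ℝ n).eval c) /
            ((ascPochhammer ℝ n).eval (2*b) * (n.factorial : ℝ)))
        = ∑' n : ℕ, C * ∫ t in S, g n t := tsum_congr hterm
      _ = C * ∑' n : ℕ, ∫ t in S, g n t := tsum_mul_left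
      _ = Real.Gamma (2*b) * Real.Gamma (2*b-1) / (Real.Gamma b * Real.Gamma (3*b-1)) := by
        rw [hval, hbetaT, hC]
        have hΓb := Real.Gamma_pos_of_pos hb0
        have hΓ3 := Real.Gamma_pos_of_pos (show (0:ℝ) < 3*b-1 by linarith)
        field_simp

/-- Gauss's evaluation: For real `a ≥ 1/2`,
`F(2a, 1−2a, 4a; 1) = Γ(4a)Γ(4a−1)/(Γ(2a)Γ(6a−1))`, the series converging. -/
theorem statement5 (a : ℝ) (ha : 1/2 ≤ a) :
    Summable (fun n : ℕ =>
      ((ascPochhammer ℝ n).eval (2*a) * (ascPochhammer ℝ n).eval (1 - 2*a)) /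
        ((ascPochhammer ℝ n).eval (4*a) * (Nat.factorial n : ℝ))) ∧
    (∑' n : ℕ,
      ((ascPochhammer ℝ n).eval (2*a) * (ascPochhammer ℝ n).eval (1 - 2*a)) /
        ((ascPochhammer ℝ n).eval (4*a) * (Nat.factorial n : ℝ)))
      = Real.Gamma (4*a) * Real.Gamma (4*a - 1) /
          (Real.Gamma (2*a) * Real.Gamma (6*a - 1)) := by
  have h := gauss_main (2*a) (by linarith)
  simp only [show (2:ℝ)*(2*a) = 4*a by ring, show (3:ℝ)*(2*a)-1 = 6*a-1 by ring,
    show (2:ℝ)*(2*a)-1 = 4*a-1 by ring] at h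
  exact h
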